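/- arXiv:2510.11989 — 2 statements merged into one kernel-verified Lean document; each statement's English description precedes it below -/
import Mathlib

section
/- Given a g-invariant probability measure μ on 𝕋² (with g = fⁿₓ for a σ-periodic point x of period n), the measure m = (1/n) Σ_{i=0}^{n-1} δ_{σⁱ(x)} × (fⁱₓ)_*(μ) is F-invariant, projects onto the uniform measure on the σ-orbit of x, and satisfies ∫ ρ₁ dm = (1/n) ∫ ρₙ(x,·) dμ. -/
open Filter MeasureTheory Topology Set

noncomputable section

instance : Fact ((0:ℝ) < 1) := ⟨one_pos⟩

/-- The two-torus `ℝ²/ℤ²`. -/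
abbrev T2 := AddCircle (1:ℝ) × AddCircle (1:ℝ)

/-- The covering projection `π : ℝ² → 𝕋²`. -/
def pr : ℝ × ℝ → T2 := fun p => (↑p.1, ↑p.2)

/-- An integer vector viewed inside `ℝ²`. -/
def intVec (v : ℤ × ℤ) : ℝ × ℝ := ((v.1 : ℝ), (v.2 : ℝ))

variable {Sg : Type*}

/-- The cocycle map `F(x,p) = (σ(x), fₓ(p))` on `M = Σ × 𝕋²`. -/
def coc (σ : Sg → Sg) (f : Sg → T2 → T2) : Sg × T2 → Sg × T2 :=
  fun q => (σ q.1, f q.1 q.2)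

/-- Time-`n` averaged displacement `ρₙ = (1/n) Σ_{i<n} ρ₁ ∘ Fⁱ`. -/
def rhoN (Fm : Sg × T2 → Sg × T2) (ρ1 : Sg × T2 → ℝ × ℝ) (n : ℕ) (q : Sg × T2) :
    ℝ × ℝ :=
  (n : ℝ)⁻¹ • ∑ i ∈ Finset.range n, ρ1 (Fm^[i] q)

/-- The pointwise rotation set `ρ_point`: all accumulation points of the
sequences `(ρₙ(x,p))ₙ`, over all points `(x,p) ∈ M`. -/
def rhoPointSet (Fm : Sg × T2 → Sg × T2) (ρ1 : Sg × T2 → ℝ × ℝ) : Set (ℝ × ℝ) :=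
  {v | ∃ q : Sg × T2, MapClusterPt v atTop fun n => rhoN Fm ρ1 n q}

/-- The Misiurewicz–Ziemian rotation set `ρ_mz = ⋂_N closure (⋃_{n ≥ N} Dₙ)`. -/
def rhoMZ (Fm : Sg × T2 → Sg × T2) (ρ1 : Sg × T2 → ℝ × ℝ) : Set (ℝ × ℝ) :=
  ⋂ N : ℕ, closure (⋃ n ∈ {n : ℕ | N ≤ n}, Set.range (rhoN Fm ρ1 n))

/-- The measure rotation set `ρ_mes = {∫ ρ₁ dm : m F-invariant probability}`. -/
def rhoMes [MeasurableSpace Sg] (Fm : Sg × T2 → Sg × T2) (ρ1 : Sg × T2 → ℝ × ℝ) :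
    Set (ℝ × ℝ) :=
  {v | ∃ m : Measure (Sg × T2), IsProbabilityMeasure m ∧ m.map Fm = m ∧
    (∫ q, ρ1 q ∂m) = v}

/-- The torus cocycle iteration `fⁿₓ = f_{σ^{n-1}x} ∘ ⋯ ∘ fₓ`. -/
def torIter (σ : Sg → Sg) (f : Sg → T2 → T2) : ℕ → Sg → T2 → T2
  | 0, _, p => p
  | n + 1, x, p => f (σ^[n] x) (torIter σ f n x p)

/-- The total (unnormalized) displacement over `n` steps of the cocycle,
`f̃ⁿₓ(q̃) − q̃ = Σ_{i<n} ρ₁(Fⁱ(x,q))`, as a function of `q ∈ 𝕋²`. -/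
def totalDisp (σ : Sg → Sg) (f : Sg → T2 → T2) (ρ1 : Sg × T2 → ℝ × ℝ)
    (n : ℕ) (x : Sg) (q : T2) : ℝ × ℝ :=
  ∑ i ∈ Finset.range n, ρ1 ((coc σ f)^[i] (x, q))

/-- The classical Misiurewicz–Ziemian rotation set of the lift `g̃ = f̃ⁿₓ`,
expressed through `g`-invariant measures: `ρ(g̃) = {∫ (g̃(q̃)−q̃) dμ}`. -/
def rotSetOfIterate [MeasurableSpace Sg] (σ : Sg → Sg) (f : Sg → T2 → T2)
    (ρ1 : Sg × T2 → ℝ × ℝ) (n : ℕ) (x : Sg) : Set (ℝ × ℝ) :=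
  {w | ∃ μ : Measure T2, IsProbabilityMeasure μ ∧
    μ.map (torIter σ f n x) = μ ∧ (∫ q, totalDisp σ f ρ1 n x q ∂μ) = w}

/-- The uniform (equidistributed) `σ`-invariant measure on the periodic orbit
of a `σ`-periodic point `x` of period `n`. -/
def orbitMeasure [MeasurableSpace Sg] (σ : Sg → Sg) (n : ℕ) (x : Sg) : Measure Sg :=
  (n : ENNReal)⁻¹ • ∑ i ∈ Finset.range n, Measure.dirac (σ^[i] x)

/-- The set of rotation vectors of `F`-invariant measures projecting to the
uniform measure on the `σ`-orbit of `x` (the periodic-word rotation set at `x`). -/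
def perWordRotSet [MeasurableSpace Sg] (σ : Sg → Sg) (f : Sg → T2 → T2)
    (ρ1 : Sg × T2 → ℝ × ℝ) (n : ℕ) (x : Sg) : Set (ℝ × ℝ) :=
  {w | ∃ m : Measure (Sg × T2), IsProbabilityMeasure m ∧
    m.map (coc σ f) = m ∧ m.map Prod.fst = orbitMeasure σ n x ∧
    (∫ q, ρ1 q ∂m) = w}


section Helpers

variable {Sg : Type*}

lemma torIter_continuous [TopologicalSpace Sg] (σ : Sg → Sg)
    (f : Sg → T2 → T2) (hf : Continuous fun q : Sg × T2 => f q.1 q.2)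
    (i : ℕ) (x : Sg) : Continuous (torIter σ f i x) := by
  induction i with
  | zero => exact continuous_id
  | succ k ih =>
    have : Continuous (f (σ^[k] x)) :=
      hf.comp (continuous_const.prodMk continuous_id)
    exact this.comp ih

lemma coc_iterate (σ : Sg → Sg) (f : Sg → T2 → T2) (i : ℕ) (x : Sg) (q : T2) :
    (coc σ f)^[i] (x, q) = (σ^[i] x, torIter σ f i x q) := by
  induction i with
  | zero => rfl
  | succ k ih =>
    rw [Function.iterate_succ_apply', ih, Function.iterate_succ_apply']
    rfl

lemma map_smul_finset_sum {α β : Type*} [MeasurableSpace α] [MeasurableSpace β]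
    {ι : Type*} (s : Finset ι) (μ : ι → MeasureTheory.Measure α)
    (c : ENNReal) {g : α → β} (hg : Measurable g) :
    (c • ∑ i ∈ s, μ i).map g = c • ∑ i ∈ s, (μ i).map g := by
  classical
  rw [MeasureTheory.Measure.map_smul]
  congr 1
  induction s using Finset.induction with
  | empty => simp
  | insert _ _ hnot ih =>
    rw [Finset.sum_insert hnot, Finset.sum_insert hnot,
      MeasureTheory.Measure.map_add _ _ hg, ih]

end Helpers

/-- for `x` a `σ`-periodic point of period `n`, `g = fⁿₓ` and a
`g`-invariant probability measure `μ` on `𝕋²`, the measure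
`m = (1/n) Σ_{i<n} δ_{σⁱ(x)} × (fⁱₓ)_*(μ)` is `F`-invariant, projects onto the
uniform measure on the `σ`-orbit of `x`, and `∫ ρ₁ dm = (1/n) ∫ ρₙ(x,·) dμ`
(with `ρₙ(x,q) = f̃ⁿₓ(q̃) − q̃` the total `n`-step displacement). -/
theorem explicit_periodic_orbit_measure
    [TopologicalSpace Sg] [CompactSpace Sg] [MeasurableSpace Sg] [BorelSpace Sg]
    (σ : Sg → Sg) (hσ : Continuous σ)
    (f : Sg → T2 → T2) (hf : Continuous fun q : Sg × T2 => f q.1 q.2)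
    (ft : Sg → (ℝ × ℝ) → (ℝ × ℝ))
    (hftc : Continuous fun q : Sg × (ℝ × ℝ) => ft q.1 q.2)
    (hlift : ∀ x p, pr (ft x p) = f x (pr p))
    (ρ1 : Sg × T2 → ℝ × ℝ) (hρc : Continuous ρ1)
    (hρ : ∀ x p, ρ1 (x, pr p) = ft x p - p)
    (x : Sg) (n : ℕ) (hn : 0 < n) (hper : σ^[n] x = x)
    (μ : Measure T2) (hμ : IsProbabilityMeasure μ)
    (hμinv : μ.map (torIter σ f n x) = μ) :
    IsProbabilityMeasure
        ((n : ENNReal)⁻¹ • ∑ i ∈ Finset.range n,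
          (Measure.dirac (σ^[i] x)).prod (μ.map (torIter σ f i x))) ∧
      ((n : ENNReal)⁻¹ • ∑ i ∈ Finset.range n,
          (Measure.dirac (σ^[i] x)).prod (μ.map (torIter σ f i x))).map (coc σ f) =
        ((n : ENNReal)⁻¹ • ∑ i ∈ Finset.range n,
          (Measure.dirac (σ^[i] x)).prod (μ.map (torIter σ f i x))) ∧
      ((n : ENNReal)⁻¹ • ∑ i ∈ Finset.range n,
          (Measure.dirac (σ^[i] x)).prod (μ.map (torIter σ f i x))).map Prod.fst =
        orbitMeasure σ n x ∧
      (∫ q, ρ1 q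
          ∂((n : ENNReal)⁻¹ • ∑ i ∈ Finset.range n,
            (Measure.dirac (σ^[i] x)).prod (μ.map (torIter σ f i x)))) =
        (n : ℝ)⁻¹ • ∫ q, totalDisp σ f ρ1 n x q ∂μ := by
  classical
  -- measurability facts
  have htorC : ∀ i, Continuous (torIter σ f i x) := fun i => torIter_continuous σ f hf i x
  have htor : ∀ i, Measurable (torIter σ f i x) := fun i => (htorC i).measurable
  have hfa : ∀ a : Sg, Measurable (f a) := fun a =>
    (hf.comp (continuous_const.prodMk continuous_id)).measurable
  have hcocC : Continuous (coc σ f) := (hσ.comp continuous_fst).prodMk hf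
  have hcoc : Measurable (coc σ f) := hcocC.measurable
  set ν : ℕ → Measure T2 := fun i => μ.map (torIter σ f i x) with hνdef
  have hνprob : ∀ i, IsProbabilityMeasure (ν i) := fun i =>
    Measure.isProbabilityMeasure_map (htor i).aemeasurable
  set T : ℕ → Measure (Sg × T2) := fun i =>
    (Measure.dirac (σ^[i] x)).prod (ν i) with hTdef
  have hTprob : ∀ i, IsProbabilityMeasure (T i) := fun i => by
    haveI := hνprob i
    exact inferInstance
  -- the product measures as single pushforwards of μ
  have hTmap : ∀ i, T i = μ.map (fun q => (σ^[i] x, torIter σ f i x q)) := by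
    intro i
    haveI := hνprob i
    rw [hTdef]
    simp only
    rw [Measure.dirac_prod, hνdef]
    simp only
    rw [Measure.map_map measurable_prodMk_left (htor i)]
    rfl
  -- probability
  have hprob : IsProbabilityMeasure
      ((n : ENNReal)⁻¹ • ∑ i ∈ Finset.range n, T i) := by
    constructor
    rw [Measure.smul_apply, Measure.finset_sum_apply]
    have : ∀ i ∈ Finset.range n, T i Set.univ = 1 := fun i _ => (hTprob i).measure_univ
    rw [Finset.sum_congr rfl this, Finset.sum_const, Finset.card_range, nsmul_eq_mul, mul_one,
      smul_eq_mul, ENNReal.inv_mul_cancel (by exact_mod_cast hn.ne') (ENNReal.natCast_ne_top n)]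
  -- one-step pushforward
  have hstep : ∀ i, (T i).map (coc σ f) = T (i + 1) := by
    intro i
    rw [hTmap i, hTmap (i + 1),
      Measure.map_map hcoc ((measurable_const.prodMk (htor i)))]
    congr 1
    funext q
    show (σ (σ^[i] x), f (σ^[i] x) (torIter σ f i x q)) = _
    rw [← Function.iterate_succ_apply' σ]
    rfl
  -- T n = T 0
  have hTn : T n = T 0 := by
    rw [hTdef]
    simp only
    rw [hper, hνdef]
    simp only
    rw [hμinv, Function.iterate_zero]
    congr 1
    exact Measure.map_id.symm
  -- shift-invariance of the sum
  have hsum : ∑ i ∈ Finset.range n, T (i + 1) = ∑ i ∈ Finset.range n, T i := by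
    have h1 : (∑ i ∈ Finset.range n, T (i + 1)) + T 0
        = (∑ i ∈ Finset.range n, T i) + T 0 := by
      rw [← Finset.sum_range_succ' T n, Finset.sum_range_succ T n, hTn]
    ext s hs
    have h2 := congrArg (fun μ : Measure (Sg × T2) => μ s) h1
    simp only [Measure.add_apply, Measure.finset_sum_apply] at h2 ⊢
    exact WithTop.add_right_cancel (measure_ne_top (T 0) s) h2
  -- invariance
  have hinv : ((n : ENNReal)⁻¹ • ∑ i ∈ Finset.range n, T i).map (coc σ f)
      = (n : ENNReal)⁻¹ • ∑ i ∈ Finset.range n, T i := by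
    rw [map_smul_finset_sum _ _ _ hcoc]
    congr 1
    rw [Finset.sum_congr rfl fun i _ => hstep i, hsum]
  -- projection
  have hproj : ((n : ENNReal)⁻¹ • ∑ i ∈ Finset.range n, T i).map Prod.fst
      = orbitMeasure σ n x := by
    rw [map_smul_finset_sum _ _ _ measurable_fst, orbitMeasure]
    congr 1
    refine Finset.sum_congr rfl fun i _ => ?_
    haveI := hνprob i
    rw [hTdef]
    simp only
    rw [Measure.map_fst_prod, measure_univ, one_smul]
  -- integrability of the orbit displacements
  have hgiC : ∀ i, Continuous (fun q : T2 => (σ^[i] x, torIter σ f i x q)) := fun i =>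
    continuous_const.prodMk (htorC i)
  have hint : ∀ i, Integrable (fun q : T2 => ρ1 (σ^[i] x, torIter σ f i x q)) μ := by
    intro i
    exact (hρc.comp (hgiC i)).integrable_of_hasCompactSupport
      (HasCompactSupport.of_compactSpace _)
  have hintT : ∀ i, Integrable ρ1 (T i) := by
    intro i
    rw [hTmap i]
    exact (integrable_map_measure
      hρc.aestronglyMeasurable
      (hgiC i).measurable.aemeasurable).2 (hint i)
  -- integral of ρ1 against T i
  have hTint : ∀ i, (∫ q, ρ1 q ∂(T i))
      = ∫ q, ρ1 ((coc σ f)^[i] (x, q)) ∂μ := by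
    intro i
    rw [hTmap i,
      integral_map (hgiC i).measurable.aemeasurable hρc.aestronglyMeasurable]
    refine integral_congr_ae (Filter.Eventually.of_forall fun q => ?_)
    simp only [coc_iterate]
  -- total displacement integral
  have htotal : (∫ q, totalDisp σ f ρ1 n x q ∂μ)
      = ∑ i ∈ Finset.range n, ∫ q, ρ1 ((coc σ f)^[i] (x, q)) ∂μ := by
    unfold totalDisp
    rw [integral_finset_sum]
    intro i _
    have : (fun q : T2 => ρ1 ((coc σ f)^[i] (x, q)))
        = fun q : T2 => ρ1 (σ^[i] x, torIter σ f i x q) := by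
      funext q; rw [coc_iterate]
    rw [this]
    exact hint i
  refine ⟨hprob, hinv, hproj, ?_⟩
  rw [integral_smul_measure, integral_finset_sum_measure fun i _ => hintT i,
    Finset.sum_congr rfl fun i _ => hTint i, htotal]
  congr 1
  simp [ENNReal.toReal_inv]
end
end

section
/- For the locally constant cocycle over the full 2-shift with f̃₀(p₁,p₂) = (p₁ + sin(2πp₂), p₂) and f̃₁(p₁,p₂) = (p₁, p₂ + √2): the rotation set of the Dirac measure at the constant-0 sequence is [−1,1] × {0}, while for each k the rotation set of the invariant measure supported on the period-k orbit of the word 0^{k−1}1 is the singleton {(0, √2/k)}. In particular the map μ ↦ ρ_μ(F̃) is not continuous for the weak-* topology. -/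
open Filter MeasureTheory Topology Set

noncomputable section

variable {Sg : Type*}

/-- The rotation set `ρ_μ(F̃)` of a base measure `μ`: rotation vectors of
`F`-invariant probability measures on `M` projecting to `μ`. -/
def rhoMuSet [MeasurableSpace Sg] (Fm : Sg × T2 → Sg × T2)
    (ρ1 : Sg × T2 → ℝ × ℝ) (μ : Measure Sg) : Set (ℝ × ℝ) :=
  {w | ∃ m : Measure (Sg × T2), IsProbabilityMeasure m ∧ m.map Fm = m ∧
    m.map Prod.fst = μ ∧ (∫ q, ρ1 q ∂m) = w}

/-- The full shift on `{0,1}^ℤ`. -/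
def shift : (ℤ → Fin 2) → (ℤ → Fin 2) := fun x i => x (i + 1)

/-- The lift `f̃₀(p₁,p₂) = (p₁ + sin(2πp₂), p₂)`. -/
def ft0 : ℝ × ℝ → ℝ × ℝ := fun p => (p.1 + Real.sin (2 * Real.pi * p.2), p.2)

/-- The lift `f̃₁(p₁,p₂) = (p₁, p₂ + √2)`. -/
def ft1 : ℝ × ℝ → ℝ × ℝ := fun p => (p.1, p.2 + Real.sqrt 2)

/-- Selection of the two lifts. -/
def ftsel : Fin 2 → ℝ × ℝ → ℝ × ℝ := fun i => if i = 0 then ft0 else ft1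

/-- The `k`-periodic word `0⋯01` (symbol `1` exactly at positions `≡ k−1 mod k`). -/
def perWord (k : ℕ) : ℤ → Fin 2 := fun i => if i % (k : ℤ) = (k : ℤ) - 1 then 1 else 0

/-! ### Auxiliary lemmas -/

section Aux

instance : IsProbabilityMeasure (volume : Measure (AddCircle (1:ℝ))) :=
  ⟨by simp [AddCircle.measure_univ]⟩

lemma measurable_shift : Measurable shift :=
  measurable_pi_lambda _ fun i => measurable_pi_apply (i + 1)

lemma shift_iter_apply (x : ℤ → Fin 2) (n : ℕ) (j : ℤ) :
    (shift^[n] x) j = x (j + n) := by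
  induction n generalizing x j with
  | zero => simp
  | succ n ih =>
    rw [Function.iterate_succ_apply, ih]
    show x ((j + n) + 1) = x (j + (n + 1 : ℕ))
    congr 1
    push_cast
    ring

lemma perWord_nat (k : ℕ) (hk : 0 < k) (t : ℕ) :
    perWord k (t : ℤ) = if t % k = k - 1 then 1 else 0 := by
  unfold perWord
  have h : ((t:ℤ) % (k:ℤ) = (k:ℤ) - 1) ↔ (t % k = k - 1) := by
    constructor <;> intro h <;> omega
  simp only [h]

lemma shift_iterate_perWord (k : ℕ) (hk : 0 < k) :
    shift^[k] (perWord k) = perWord k := by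
  funext j
  rw [shift_iter_apply]
  unfold perWord
  have : (j + (k:ℤ)) % (k:ℤ) = j % (k:ℤ) := by
    simpa using Int.add_mul_emod_self_left (a := j) (b := (k:ℤ)) (c := 1)
  rw [this]

/-- Coercion `ℝ → AddCircle 1` is surjective. -/
lemma circle_surj (b : AddCircle (1:ℝ)) : ∃ r : ℝ, (r : AddCircle (1:ℝ)) = b := by
  obtain ⟨r, _, h⟩ := AddCircle.eq_coe_Ico b; exact ⟨r, h⟩

lemma pr_surj (q : T2) : ∃ p : ℝ × ℝ, pr p = q := by
  obtain ⟨r, hr⟩ := circle_surj q.1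
  obtain ⟨s, hs⟩ := circle_surj q.2
  exact ⟨(r, s), by simp [pr, hr, hs]⟩

/-- The sine function on the circle. -/
def scR : AddCircle (1:ℝ) → ℝ :=
  fun b => Real.sin (2 * Real.pi * (AddCircle.equivIco 1 0 b : ℝ))

lemma scR_coe (s : ℝ) : scR (s : AddCircle (1:ℝ)) = Real.sin (2 * Real.pi * s) := by
  unfold scR
  set u : ℝ := (AddCircle.equivIco 1 0 (s : AddCircle (1:ℝ)) : ℝ) with hu
  have hcoe : (u : AddCircle (1:ℝ)) = (s : AddCircle (1:ℝ)) :=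
    (AddCircle.equivIco 1 0).symm_apply_apply (s : AddCircle (1:ℝ))
  obtain ⟨z, hz⟩ : ∃ z : ℤ, s = u + z := by
    rw [QuotientAddGroup.eq_iff_sub_mem] at hcoe
    obtain ⟨z, hz⟩ := hcoe
    simp only [zsmul_eq_mul, mul_one] at hz
    exact ⟨-z, by push_cast; linarith⟩
  have : 2 * Real.pi * u = 2 * Real.pi * s - z * (2 * Real.pi) := by
    rw [hz]; push_cast; ring
  rw [this, Real.sin_periodic.sub_int_mul_eq]

lemma scR_measurable : Measurable scR := by
  apply Real.measurable_sin.comp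
  apply Measurable.const_mul
  exact measurable_subtype_coe.comp (AddCircle.measurableEquivIco (T := 1) 0).measurable

end Aux
section Aux2

/-- The lifted fiber orbit. -/
def liftOrb (x : ℤ → Fin 2) (p : ℝ × ℝ) : ℕ → ℝ × ℝ
  | 0 => p
  | n + 1 => ftsel ((shift^[n] x) 0) (liftOrb x p n)

/-- Number of `1` symbols among the first `n` entries. -/
def ones (x : ℤ → Fin 2) (n : ℕ) : ℕ :=
  ∑ j ∈ Finset.range n, if x (j : ℤ) = 1 then 1 else 0

lemma fin2_cases (i : Fin 2) : i = 0 ∨ i = 1 := by omega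

lemma liftOrb_snd (x : ℤ → Fin 2) (p : ℝ × ℝ) (n : ℕ) :
    (liftOrb x p n).2 = p.2 + Real.sqrt 2 * (ones x n : ℕ) := by
  induction n with
  | zero => simp [liftOrb, ones]
  | succ n ih =>
    have hx0 : (shift^[n] x) 0 = x (n : ℤ) := by rw [shift_iter_apply]; norm_num
    have hones : (ones x (n+1) : ℕ) = ones x n + if x (n : ℤ) = 1 then 1 else 0 := by
      unfold ones; rw [Finset.sum_range_succ]
    rcases fin2_cases (x (n : ℤ)) with h | h
    · have : ones x (n+1) = ones x n := by rw [hones, h]; simp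
      rw [show liftOrb x p (n+1) = ftsel ((shift^[n] x) 0) (liftOrb x p n) from rfl,
        hx0, h, this]
      simp [ftsel, ft0, ih]
    · have : ones x (n+1) = ones x n + 1 := by rw [hones, h]; simp
      rw [show liftOrb x p (n+1) = ftsel ((shift^[n] x) 0) (liftOrb x p n) from rfl,
        hx0, h, this]
      have h10 : (1 : Fin 2) ≠ 0 := by decide
      simp only [ftsel, if_neg h10, ft1]
      rw [ih]
      push_cast
      ring

lemma liftOrb_fst (x : ℤ → Fin 2) (p : ℝ × ℝ) (n : ℕ) :
    (liftOrb x p n).1 = p.1 + ∑ j ∈ Finset.range n,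
      (if x (j : ℤ) = 0 then
        Real.sin (2 * Real.pi * p.2 + (ones x j : ℕ) * (2 * Real.pi * Real.sqrt 2))
      else 0) := by
  induction n with
  | zero => simp [liftOrb]
  | succ n ih =>
    have hx0 : (shift^[n] x) 0 = x (n : ℤ) := by rw [shift_iter_apply]; norm_num
    rw [Finset.sum_range_succ, ← add_assoc, ← ih]
    rw [show liftOrb x p (n+1) = ftsel ((shift^[n] x) 0) (liftOrb x p n) from rfl, hx0]
    rcases fin2_cases (x (n : ℤ)) with h | h
    · rw [h]
      have e : ftsel 0 = ft0 := by simp [ftsel]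
      rw [e, if_pos rfl]
      show (liftOrb x p n).1 + Real.sin (2 * Real.pi * (liftOrb x p n).2) = _
      rw [liftOrb_snd]
      have harg : 2 * Real.pi * (p.2 + Real.sqrt 2 * (ones x n : ℕ))
          = 2 * Real.pi * p.2 + (ones x n : ℕ) * (2 * Real.pi * Real.sqrt 2) := by ring
      rw [harg]
    · rw [h]
      have h10 : (1 : Fin 2) ≠ 0 := by decide
      simp [ftsel, if_neg h10, ft1]

/-- Uniform bound for the Weyl sums of `sin`. -/
lemma trig_bound : ∃ B : ℝ, 0 ≤ B ∧ ∀ (θ : ℝ) (q : ℕ),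
    |∑ l ∈ Finset.range q, Real.sin (θ + (l : ℕ) * (2 * Real.pi * Real.sqrt 2))| ≤ B := by
  set α : ℝ := 2 * Real.pi * Real.sqrt 2 with hα
  set z : ℂ := Complex.exp ((α : ℂ) * Complex.I) with hzdef
  have hz1 : z ≠ 1 := by
    rw [hzdef, Ne, Complex.exp_eq_one_iff]
    rintro ⟨n, hn⟩
    have hI : (α : ℂ) * Complex.I = ((n : ℂ) * (2 * Real.pi)) * Complex.I := by
      rw [hn]; push_cast; ring
    have hI' : (α : ℂ) = (n : ℂ) * (2 * Real.pi) := mul_right_cancel₀ Complex.I_ne_zero hI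
    have hr : α = (n : ℝ) * (2 * Real.pi) := by exact_mod_cast hI'
    have hπ : (2 * Real.pi) ≠ 0 := by positivity
    have : Real.sqrt 2 = (n : ℝ) := by
      have h2 : 2 * Real.pi * Real.sqrt 2 = 2 * Real.pi * (n : ℝ) := by rw [hα] at hr; linarith [hr]
      exact mul_left_cancel₀ hπ h2
    exact irrational_sqrt_two.ne_int n this
  have habs : ‖z‖ = 1 := Complex.norm_exp_ofReal_mul_I α
  refine ⟨2 / ‖z - 1‖, by positivity, fun θ q => ?_⟩
  have key : ∑ l ∈ Finset.range q, Real.sin (θ + (l : ℕ) * α)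
      = (Complex.exp ((θ : ℂ) * Complex.I) * ∑ l ∈ Finset.range q, z ^ l).im := by
    rw [Finset.mul_sum, Complex.im_sum]
    apply Finset.sum_congr rfl
    intro l _
    have hzl : z ^ l = Complex.exp (((l : ℕ) * α : ℝ) * Complex.I) := by
      rw [hzdef, ← Complex.exp_nat_mul]
      push_cast
      ring_nf
    rw [hzl, ← Complex.exp_add]
    have : (θ : ℂ) * Complex.I + ((l : ℕ) * α : ℝ) * Complex.I
        = ((θ + (l : ℕ) * α : ℝ) : ℂ) * Complex.I := by push_cast; ring
    rw [this, Complex.exp_ofReal_mul_I_im]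
  rw [key]
  calc |(Complex.exp ((θ : ℂ) * Complex.I) * ∑ l ∈ Finset.range q, z ^ l).im|
      ≤ ‖Complex.exp ((θ : ℂ) * Complex.I) * ∑ l ∈ Finset.range q, z ^ l‖ :=
        Complex.abs_im_le_norm _
    _ = ‖∑ l ∈ Finset.range q, z ^ l‖ := by
        rw [norm_mul, Complex.norm_exp_ofReal_mul_I, one_mul]
    _ ≤ 2 / ‖z - 1‖ := by
        rw [geom_sum_eq hz1, norm_div]
        have hd : 0 < ‖z - 1‖ := by
          rw [norm_pos_iff]; exact sub_ne_zero.mpr hz1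
        have h2 : ‖z ^ q - 1‖ ≤ 2 := by
          calc ‖z ^ q - 1‖ ≤ ‖z ^ q‖ + ‖(1 : ℂ)‖ := by
                exact norm_sub_le (z ^ q) 1
            _ = 2 := by rw [norm_pow, habs, one_pow, norm_one]; norm_num
        exact (div_le_div_iff_of_pos_right hd).mpr h2

end Aux2
section Aux3

lemma dvd_iff_mod_eq (k m : ℕ) (hk : 0 < k) : k ∣ m + 1 ↔ m % k = k - 1 := by
  constructor
  · intro h
    obtain ⟨c, hc⟩ := h
    rcases Nat.eq_zero_or_pos c with rfl | hc1
    · omega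
    · have hm : m = k * (c - 1) + (k - 1) := by
        cases c with
        | zero => omega
        | succ c => rw [Nat.mul_succ] at hc; simp only [Nat.add_sub_cancel]; omega
      rw [hm, Nat.mul_add_mod, Nat.mod_eq_of_lt (by omega)]
  · intro h
    have h2 : m = k * (m / k) + (k - 1) := by
      conv_lhs => rw [← Nat.div_add_mod m k]
      omega
    exact ⟨m / k + 1, by rw [Nat.mul_add]; omega⟩

lemma sum_range_mul_eq {M : Type*} [AddCommMonoid M] (g : ℕ → M) (k q : ℕ) :
    ∑ t ∈ Finset.range (k * q), g t
      = ∑ l ∈ Finset.range q, ∑ s ∈ Finset.range k, g (k * l + s) := by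
  induction q with
  | zero => simp
  | succ q ih =>
    rw [Nat.mul_succ, Finset.sum_range_add, ih, Finset.sum_range_succ]

/-- Bound for the partial sums of the staircase sequence. -/
lemma gsum_bound {B : ℝ} (hB : 0 ≤ B)
    (hB2 : ∀ (θ : ℝ) (q : ℕ),
      |∑ l ∈ Finset.range q, Real.sin (θ + (l : ℕ) * (2 * Real.pi * Real.sqrt 2))| ≤ B)
    (k : ℕ) (hk : 0 < k) (θ : ℝ) (m : ℕ) :
    |∑ t ∈ Finset.range m,
        (if t % k = k - 1 then (0:ℝ)
          else Real.sin (θ + ((t / k : ℕ) : ℝ) * (2 * Real.pi * Real.sqrt 2)))|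
      ≤ k * B + k := by
  set g : ℕ → ℝ := fun t =>
    if t % k = k - 1 then (0:ℝ)
    else Real.sin (θ + ((t / k : ℕ) : ℝ) * (2 * Real.pi * Real.sqrt 2)) with hg
  have hg1 : ∀ t, |g t| ≤ 1 := by
    intro t
    rw [hg]
    dsimp only
    split
    · simp
    · exact Real.abs_sin_le_one _
  have hsplit : ∑ t ∈ Finset.range m, g t
      = ∑ t ∈ Finset.range (k * (m / k)), g t
        + ∑ s ∈ Finset.range (m % k), g (k * (m / k) + s) := by
    conv_lhs => rw [← Nat.div_add_mod m k]
    rw [Finset.sum_range_add]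
  have hblock : ∑ t ∈ Finset.range (k * (m / k)), g t
      = ((k : ℝ) - 1) * ∑ l ∈ Finset.range (m / k),
          Real.sin (θ + (l : ℕ) * (2 * Real.pi * Real.sqrt 2)) := by
    rw [sum_range_mul_eq, Finset.mul_sum]
    apply Finset.sum_congr rfl
    intro l _
    have hterm : ∀ s ∈ Finset.range k, g (k * l + s)
        = if s = k - 1 then (0:ℝ)
          else Real.sin (θ + (l : ℕ) * (2 * Real.pi * Real.sqrt 2)) := by
      intro s hs
      rw [Finset.mem_range] at hs
      rw [hg]
      dsimp only
      rw [Nat.mul_add_mod, Nat.mod_eq_of_lt hs, Nat.mul_add_div hk, Nat.div_eq_of_lt hs,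
        Nat.add_zero]
    rw [Finset.sum_congr rfl hterm]
    have : ∑ s ∈ Finset.range k, (if s = k - 1 then (0:ℝ)
        else Real.sin (θ + (l : ℕ) * (2 * Real.pi * Real.sqrt 2)))
        = ∑ s ∈ Finset.range k, (Real.sin (θ + (l : ℕ) * (2 * Real.pi * Real.sqrt 2))
            - if s = k - 1 then Real.sin (θ + (l : ℕ) * (2 * Real.pi * Real.sqrt 2)) else 0) := by
      apply Finset.sum_congr rfl
      intro s _
      split <;> simp
    rw [this, Finset.sum_sub_distrib, Finset.sum_const, Finset.card_range,
      Finset.sum_ite_eq' (Finset.range k) (k - 1)]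
    have hmem : k - 1 ∈ Finset.range k := by simp; omega
    rw [if_pos hmem]
    ring
  rw [hsplit]
  have h1 : |∑ t ∈ Finset.range (k * (m / k)), g t| ≤ k * B := by
    rw [hblock, abs_mul]
    have hk1' : (1:ℝ) ≤ (k:ℝ) := by exact_mod_cast hk
    have hk1 : |(k : ℝ) - 1| ≤ (k : ℝ) := by rw [abs_le]; constructor <;> linarith
    exact mul_le_mul hk1 (hB2 θ (m / k)) (abs_nonneg _) (Nat.cast_nonneg k)
  have h2 : |∑ s ∈ Finset.range (m % k), g (k * (m / k) + s)| ≤ (k : ℝ) := by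
    calc |∑ s ∈ Finset.range (m % k), g (k * (m / k) + s)|
        ≤ ∑ s ∈ Finset.range (m % k), |g (k * (m / k) + s)| := Finset.abs_sum_le_sum_abs _ _
      _ ≤ ∑ s ∈ Finset.range (m % k), 1 := Finset.sum_le_sum fun s _ => hg1 _
      _ = ((m % k : ℕ) : ℝ) := by
          rw [Finset.sum_const, Finset.card_range, nsmul_eq_mul, mul_one]
      _ ≤ (k : ℝ) := by exact_mod_cast (Nat.mod_lt m hk).le
  calc |∑ t ∈ Finset.range (k * (m / k)), g t + ∑ s ∈ Finset.range (m % k), g (k * (m / k) + s)|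
      ≤ |∑ t ∈ Finset.range (k * (m / k)), g t| + |∑ s ∈ Finset.range (m % k), g (k * (m / k) + s)| :=
        abs_add_le _ _
    _ ≤ k * B + k := add_le_add h1 h2

lemma symbol_perWord (k : ℕ) (hk : 0 < k) (i : ℕ) (j : ℕ) :
    (shift^[i] (perWord k)) (j : ℤ) = if (i + j) % k = k - 1 then 1 else 0 := by
  rw [shift_iter_apply]
  have : ((j : ℤ) + (i : ℕ)) = ((i + j : ℕ) : ℤ) := by push_cast; ring
  rw [this, perWord_nat k hk]


/-- `ones` count for the shifted periodic word. -/
lemma ones_perWord (k : ℕ) (hk : 0 < k) (i : ℕ) (hi : i < k) (n : ℕ) :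
    ones (shift^[i] (perWord k)) n = (i + n) / k := by
  induction n with
  | zero => simp [ones, Nat.div_eq_of_lt hi]
  | succ n ih =>
    have hx2 : (shift^[i] (perWord k)) (n : ℤ) = if (i + n) % k = k - 1 then 1 else 0 :=
      symbol_perWord k hk i n
    unfold ones
    rw [Finset.sum_range_succ]
    show ones (shift^[i] (perWord k)) n + _ = _
    rw [ih, hx2]
    have hstep : (i + (n+1)) / k = (i + n) / k + if (i + n) % k = k - 1 then 1 else 0 := by
      rw [show i + (n+1) = (i+n) + 1 by ring, Nat.succ_div,
        if_congr (dvd_iff_mod_eq k (i+n) hk) rfl rfl]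
    rw [hstep]
    by_cases hc : (i + n) % k = k - 1
    · rw [if_pos hc, if_pos hc]
      simp
    · rw [if_neg hc, if_neg hc]
      simp

end Aux3
section Aux4

/-- The Haar probability measure on the 2-torus. -/
def lam2 : Measure T2 := (volume : Measure (AddCircle (1:ℝ))).prod volume

instance : IsProbabilityMeasure lam2 := by unfold lam2; infer_instance

lemma coc_measurable {f : Fin 2 → T2 → T2} (hf : ∀ i, Continuous (f i)) :
    Measurable (coc shift fun x : ℤ → Fin 2 => f (x 0)) := by
  have h0 : Measurable fun q : (ℤ → Fin 2) × T2 => q.1 0 :=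
    (measurable_pi_apply 0).comp measurable_fst
  have heq : (fun q : (ℤ → Fin 2) × T2 => f (q.1 0) q.2)
      = fun q => if q.1 0 = 0 then f 0 q.2 else f 1 q.2 := by
    funext q
    rcases fin2_cases (q.1 0) with h | h <;> rw [h]
    · rw [if_pos rfl]
    · rw [if_neg (by decide : (1 : Fin 2) ≠ 0)]
  have h2 : Measurable fun q : (ℤ → Fin 2) × T2 => f (q.1 0) q.2 := by
    rw [heq]
    exact Measurable.ite (h0 (measurableSet_singleton 0))
      ((hf 0).measurable.comp measurable_snd) ((hf 1).measurable.comp measurable_snd)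
  exact (measurable_shift.comp measurable_fst).prodMk h2

lemma f0_apply {f : Fin 2 → T2 → T2} (hlift : ∀ i p, pr (ftsel i p) = f i (pr p)) (q : T2) :
    f 0 q = (q.1 + ((scR q.2 : ℝ) : AddCircle (1:ℝ)), q.2) := by
  obtain ⟨p, hp⟩ := pr_surj q
  subst hp
  rw [← hlift 0 p]
  show pr (ft0 p) = _
  unfold pr ft0
  dsimp only
  rw [scR_coe]
  congr 1

lemma f1_apply {f : Fin 2 → T2 → T2} (hlift : ∀ i p, pr (ftsel i p) = f i (pr p)) (q : T2) :
    f 1 q = (q.1, q.2 + ((Real.sqrt 2 : ℝ) : AddCircle (1:ℝ))) := by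
  obtain ⟨p, hp⟩ := pr_surj q
  subst hp
  rw [← hlift 1 p]
  show pr (ftsel 1 p) = _
  rw [show ftsel 1 = ft1 by simp [ftsel]]
  unfold pr ft1
  dsimp only
  congr 1

lemma mp_f0 {f : Fin 2 → T2 → T2} (hlift : ∀ i p, pr (ftsel i p) = f i (pr p)) :
    MeasurePreserving (f 0) lam2 lam2 := by
  have hsw : MeasurePreserving (Prod.swap : T2 → T2) lam2 lam2 :=
    ⟨measurable_swap, Measure.prod_swap⟩
  have hcoe : Measurable fun r : ℝ => (r : AddCircle (1:ℝ)) :=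
    AddCircle.measurable_mk'
  have hgm : Measurable (Function.uncurry fun (b a : AddCircle (1:ℝ)) =>
      a + ((scR b : ℝ) : AddCircle (1:ℝ))) := by
    apply Measurable.add
    · exact measurable_snd
    · exact (hcoe.comp scR_measurable).comp measurable_fst
  have hskew : MeasurePreserving
      (fun q : AddCircle (1:ℝ) × AddCircle (1:ℝ) => (q.1, q.2 + ((scR q.1 : ℝ) : AddCircle (1:ℝ))))
      lam2 lam2 :=
    (MeasurePreserving.id volume).skew_product hgm
      (Filter.Eventually.of_forall fun b => (measurePreserving_add_right volume _).map_eq)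
  have hcomp := hsw.comp (hskew.comp hsw)
  have : (Prod.swap ∘ (fun q : AddCircle (1:ℝ) × AddCircle (1:ℝ) =>
      (q.1, q.2 + ((scR q.1 : ℝ) : AddCircle (1:ℝ)))) ∘ Prod.swap) = f 0 := by
    funext q
    rw [f0_apply hlift]
    rfl
  rwa [this] at hcomp

lemma mp_f1 {f : Fin 2 → T2 → T2} (hlift : ∀ i p, pr (ftsel i p) = f i (pr p)) :
    MeasurePreserving (f 1) lam2 lam2 := by
  have h := (MeasurePreserving.id (volume : Measure (AddCircle (1:ℝ)))).prod
    (measurePreserving_add_right volume ((Real.sqrt 2 : ℝ) : AddCircle (1:ℝ)))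
  have : (Prod.map (id : AddCircle (1:ℝ) → AddCircle (1:ℝ))
      (· + ((Real.sqrt 2 : ℝ) : AddCircle (1:ℝ)))) = f 1 := by
    funext q
    rw [f1_apply hlift]
    rfl
  rwa [this] at h

lemma mp_fi {f : Fin 2 → T2 → T2} (hlift : ∀ i p, pr (ftsel i p) = f i (pr p)) (i : Fin 2) :
    MeasurePreserving (f i) lam2 lam2 := by
  rcases fin2_cases i with h | h <;> rw [h]
  · exact mp_f0 hlift
  · exact mp_f1 hlift

lemma map_finset_sum' {ι α β : Type*} [MeasurableSpace α] [MeasurableSpace β] {F : α → β}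
    (hF : Measurable F) (s : Finset ι) (μ : ι → Measure α) :
    Measure.map F (∑ i ∈ s, μ i) = ∑ i ∈ s, Measure.map F (μ i) := by
  classical
  induction s using Finset.induction_on with
  | empty => simp
  | insert _ _ ha ih =>
    rw [Finset.sum_insert ha, Finset.sum_insert ha, Measure.map_add _ _ hF, ih]

lemma rho_bound {ρ1 : (ℤ → Fin 2) × T2 → ℝ × ℝ} (hρc : Continuous ρ1) :
    ∃ C : ℝ, ∀ q, ‖ρ1 q‖ ≤ C := by
  obtain ⟨C, hC⟩ := isCompact_univ.exists_bound_of_continuousOn hρc.continuousOn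
  exact ⟨C, fun q => hC q trivial⟩

end Aux4
section Aux5

lemma prod_fst_sum {ι : Type*} (s : Finset ι) (g : ι → ℝ × ℝ) :
    (∑ i ∈ s, g i).1 = ∑ i ∈ s, (g i).1 :=
  map_sum (AddMonoidHom.fst ℝ ℝ) g s

lemma prod_snd_sum {ι : Type*} (s : Finset ι) (g : ι → ℝ × ℝ) :
    (∑ i ∈ s, g i).2 = ∑ i ∈ s, (g i).2 :=
  map_sum (AddMonoidHom.snd ℝ ℝ) g s

lemma eq_of_abs_le_div {a C : ℝ} (hC : 0 ≤ C) (h : ∀ n : ℕ, 0 < n → |a| ≤ C / n) : a = 0 := by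
  by_contra ha
  have ha' : 0 < |a| := abs_pos.mpr ha
  obtain ⟨n, hn⟩ := exists_nat_gt (C / |a|)
  have hn0 : 0 < n := by
    rcases Nat.eq_zero_or_pos n with rfl | h' 
    · exfalso
      have h0 : (0:ℝ) ≤ C / |a| := div_nonneg hC ha'.le
      simp only [Nat.cast_zero] at hn
      linarith
    · exact h'
  have h1 := h n hn0
  have hncast : (0:ℝ) < n := by exact_mod_cast hn0
  rw [div_lt_iff₀ ha'] at hn
  have h2 : C / n < |a| := by rw [div_lt_iff₀ hncast]; linarith
  linarith

lemma integral_comp_iterate {Fm : (ℤ → Fin 2) × T2 → (ℤ → Fin 2) × T2}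
    (hFm : Measurable Fm) {m : Measure ((ℤ → Fin 2) × T2)} [IsProbabilityMeasure m]
    (hinv : m.map Fm = m) {g : (ℤ → Fin 2) × T2 → ℝ} (hg : Continuous g) (n : ℕ) :
    ∫ q, g (Fm^[n] q) ∂m = ∫ q, g q ∂m := by
  have hmp : MeasurePreserving Fm m m := ⟨hFm, hinv⟩
  have hmapn : m.map (Fm^[n]) = m := (hmp.iterate n).map_eq
  conv_rhs => rw [← hmapn]
  rw [integral_map (hFm.iterate n).aemeasurable hg.measurable.aestronglyMeasurable]

/-- iterate identity for the cocycle. -/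
lemma iter_coc {f : Fin 2 → T2 → T2} (hlift : ∀ i p, pr (ftsel i p) = f i (pr p))
    (x : ℤ → Fin 2) (p : ℝ × ℝ) (n : ℕ) :
    (coc shift fun x : ℤ → Fin 2 => f (x 0))^[n] (x, pr p)
      = (shift^[n] x, pr (liftOrb x p n)) := by
  induction n with
  | zero => rfl
  | succ n ih =>
    rw [Function.iterate_succ_apply', ih]
    show (shift (shift^[n] x), f ((shift^[n] x) 0) (pr (liftOrb x p n))) = _
    rw [← hlift ((shift^[n] x) 0) (liftOrb x p n), ← Function.iterate_succ_apply' shift n x]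
    rfl

lemma birkhoff_sum_eq {f : Fin 2 → T2 → T2} (hlift : ∀ i p, pr (ftsel i p) = f i (pr p))
    {ρ1 : (ℤ → Fin 2) × T2 → ℝ × ℝ}
    (hρ : ∀ x p, ρ1 (x, pr p) = ftsel (x 0) p - p)
    (x : ℤ → Fin 2) (p : ℝ × ℝ) (n : ℕ) :
    ∑ j ∈ Finset.range n, ρ1 ((coc shift fun x : ℤ → Fin 2 => f (x 0))^[j] (x, pr p))
      = liftOrb x p n - p := by
  induction n with
  | zero => simp [liftOrb]
  | succ n ih =>
    rw [Finset.sum_range_succ, ih, iter_coc hlift, hρ]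
    show liftOrb x p n - p + (ftsel ((shift^[n] x) 0) (liftOrb x p n) - liftOrb x p n)
        = liftOrb x p (n+1) - p
    rw [show liftOrb x p (n+1) = ftsel ((shift^[n] x) 0) (liftOrb x p n) from rfl]
    abel

/-- first-coordinate Birkhoff sums over the periodic orbit are uniformly bounded. -/
lemma birkhoff_fst_bound {B : ℝ} (hB0 : 0 ≤ B)
    (hB : ∀ (θ : ℝ) (q : ℕ),
      |∑ l ∈ Finset.range q, Real.sin (θ + (l : ℕ) * (2 * Real.pi * Real.sqrt 2))| ≤ B)
    (k : ℕ) (hk : 0 < k) (i : ℕ) (hi : i < k) (p : ℝ × ℝ) (n : ℕ) :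
    |(liftOrb (shift^[i] (perWord k)) p n).1 - p.1| ≤ 2 * ((k:ℝ) * B + k) := by
  set θ := 2 * Real.pi * p.2 with hθ
  set G : ℕ → ℝ := fun t => if t % k = k - 1 then (0:ℝ)
      else Real.sin (θ + ((t / k : ℕ) : ℝ) * (2 * Real.pi * Real.sqrt 2)) with hG
  have hterm : ∀ j : ℕ, (if (shift^[i] (perWord k)) (j:ℤ) = 0 then
      Real.sin (2 * Real.pi * p.2 + ((ones (shift^[i] (perWord k)) j : ℕ) : ℝ)
        * (2 * Real.pi * Real.sqrt 2)) else 0)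
      = G (i + j) := by
    intro j
    rw [hG]
    dsimp only
    rw [ones_perWord k hk i hi j, symbol_perWord k hk i j]
    by_cases hc : (i + j) % k = k - 1
    · rw [if_pos hc, if_pos hc, if_neg (by decide : (1 : Fin 2) ≠ 0)]
    · rw [if_neg hc, if_neg hc, if_pos rfl, hθ]
  have hsum : (liftOrb (shift^[i] (perWord k)) p n).1 - p.1
      = ∑ j ∈ Finset.range n, G (i + j) := by
    rw [liftOrb_fst, Finset.sum_congr rfl (fun j _ => hterm j)]
    ring
  have hsplit := Finset.sum_range_add G i n
  have hsum2 : ∑ j ∈ Finset.range n, G (i + j)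
      = (∑ t ∈ Finset.range (i + n), G t) - ∑ t ∈ Finset.range i, G t := by
    rw [hsplit]; ring
  rw [hsum, hsum2]
  have hb1 := gsum_bound hB0 hB k hk θ (i + n)
  have hb2 := gsum_bound hB0 hB k hk θ i
  rw [← hG] at hb1 hb2
  calc |(∑ t ∈ Finset.range (i + n), G t) - ∑ t ∈ Finset.range i, G t|
      ≤ |∑ t ∈ Finset.range (i + n), G t| + |∑ t ∈ Finset.range i, G t| := abs_sub _ _
    _ ≤ ((k:ℝ) * B + k) + ((k:ℝ) * B + k) := add_le_add hb1 hb2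
    _ = 2 * ((k:ℝ) * B + k) := by ring

/-- second-coordinate Birkhoff sums over the periodic orbit. -/
lemma birkhoff_snd_bound (k : ℕ) (hk : 0 < k) (i : ℕ) (hi : i < k) (p : ℝ × ℝ) (n : ℕ) :
    |(liftOrb (shift^[i] (perWord k)) p n).2 - p.2 - (n : ℝ) * (Real.sqrt 2 / k)|
      ≤ 2 * Real.sqrt 2 := by
  rw [liftOrb_snd, ones_perWord k hk i hi n]
  have hk' : (0:ℝ) < k := by exact_mod_cast hk
  set d : ℝ := (((i + n) / k : ℕ) : ℝ) with hd
  set r : ℝ := (((i + n) % k : ℕ) : ℝ) with hr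
  have hdm : (k:ℝ) * d + r = (i:ℝ) + n := by
    rw [hd, hr]
    exact_mod_cast Nat.div_add_mod (i + n) k
  have hr0 : 0 ≤ r := Nat.cast_nonneg _
  have hrk : r < k := by rw [hr]; exact_mod_cast Nat.mod_lt (i + n) hk
  have hik : (i:ℝ) < k := by exact_mod_cast hi
  have hi0 : (0:ℝ) ≤ i := Nat.cast_nonneg _
  have hs2 : (0:ℝ) ≤ Real.sqrt 2 := Real.sqrt_nonneg 2
  have hkd : (k:ℝ) * d = (i:ℝ) + n - r := by linarith
  have key : p.2 + Real.sqrt 2 * d - p.2 - (n:ℝ) * (Real.sqrt 2 / k)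
      = (Real.sqrt 2 / k) * ((i:ℝ) - r) := by
    field_simp
    nlinarith [hkd]
  rw [key, abs_mul, abs_of_nonneg (div_nonneg hs2 hk'.le)]
  have habs : |(i:ℝ) - r| ≤ (k:ℝ) := by rw [abs_le]; constructor <;> linarith
  calc (Real.sqrt 2 / k) * |(i:ℝ) - r| ≤ (Real.sqrt 2 / k) * k :=
        mul_le_mul_of_nonneg_left habs (div_nonneg hs2 hk'.le)
    _ = Real.sqrt 2 := by field_simp
    _ ≤ 2 * Real.sqrt 2 := by linarith

end Aux5
section Aux6

lemma ae_orbit {m : Measure ((ℤ → Fin 2) × T2)} [IsProbabilityMeasure m]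
    (k : ℕ)
    (hproj : m.map Prod.fst = ((k : ENNReal)⁻¹ • ∑ i ∈ Finset.range k,
        Measure.dirac (shift^[i] (perWord k)))) :
    ∀ᵐ q ∂m, ∃ i, i < k ∧ q.1 = shift^[i] (perWord k) := by
  set O : Set (ℤ → Fin 2) := ⋃ i ∈ Finset.range k, {shift^[i] (perWord k)} with hO
  have hOm : MeasurableSet O :=
    MeasurableSet.biUnion (Finset.range k).countable_toSet
      (fun i _ => measurableSet_singleton _)
  have hmap := Measure.map_apply
    (measurable_fst : Measurable (Prod.fst : (ℤ → Fin 2) × T2 → ℤ → Fin 2)) hOm.compl (μ := m)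
  rw [hproj] at hmap
  have hz : ((k : ENNReal)⁻¹ • ∑ i ∈ Finset.range k,
      Measure.dirac (shift^[i] (perWord k))) Oᶜ = 0 := by
    rw [Measure.smul_apply, Measure.finset_sum_apply]
    have hzero : ∀ i ∈ Finset.range k, Measure.dirac (shift^[i] (perWord k)) Oᶜ = 0 := by
      intro i hi
      rw [Measure.dirac_apply' _ hOm.compl]
      apply Set.indicator_of_notMem
      simp only [Set.mem_compl_iff, not_not]
      exact Set.mem_biUnion hi rfl
    rw [Finset.sum_congr rfl hzero]
    simp
  rw [hz] at hmap
  rw [ae_iff]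
  have hset : {q : (ℤ → Fin 2) × T2 | ¬ ∃ i, i < k ∧ q.1 = shift^[i] (perWord k)}
      = Prod.fst ⁻¹' Oᶜ := by
    ext q
    simp only [Set.mem_setOf_eq, Set.mem_preimage, Set.mem_compl_iff, hO,
      Set.mem_iUnion, Set.mem_singleton_iff, Finset.mem_range, not_exists]
    constructor
    · intro h i
      intro hik
      exact fun he => h i ⟨hik, he⟩
    · intro h i hik
      exact h i hik.1 hik.2
  rw [hset]
  exact hmap.symm

lemma forced2 {f : Fin 2 → T2 → T2} (hf : ∀ i, Continuous (f i))
    (hlift : ∀ i p, pr (ftsel i p) = f i (pr p))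
    {ρ1 : (ℤ → Fin 2) × T2 → ℝ × ℝ} (hρc : Continuous ρ1)
    (hρ : ∀ x p, ρ1 (x, pr p) = ftsel (x 0) p - p)
    (k : ℕ) (hk : 0 < k) (m : Measure ((ℤ → Fin 2) × T2))
    [IsProbabilityMeasure m]
    (hinv : m.map (coc shift fun x => f (x 0)) = m)
    (hproj : m.map Prod.fst = ((k : ENNReal)⁻¹ • ∑ i ∈ Finset.range k,
        Measure.dirac (shift^[i] (perWord k)))) :
    (∫ q, ρ1 q ∂m) = ((0:ℝ), Real.sqrt 2 / (k:ℝ)) := by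
  obtain ⟨B, hB0, hB⟩ := trig_bound
  set Fm := coc shift fun x : ℤ → Fin 2 => f (x 0) with hFmdef
  have hFm : Measurable Fm := coc_measurable hf
  obtain ⟨C, hC⟩ := rho_bound hρc
  have hae := ae_orbit k hproj
  have hg1 : Continuous fun q : (ℤ → Fin 2) × T2 => (ρ1 q).1 := continuous_fst.comp hρc
  have hg2 : Continuous fun q : (ℤ → Fin 2) × T2 => (ρ1 q).2 := continuous_snd.comp hρc
  have hint : Integrable ρ1 m := ⟨hρc.measurable.aestronglyMeasurable,
    HasFiniteIntegral.of_bounded (Filter.Eventually.of_forall hC)⟩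
  have hv1 : ∫ q, (ρ1 q).1 ∂m = (∫ q, ρ1 q ∂m).1 := by
    have h := (ContinuousLinearMap.fst ℝ ℝ ℝ).integral_comp_comm hint
    simpa using h
  have hv2 : ∫ q, (ρ1 q).2 ∂m = (∫ q, ρ1 q ∂m).2 := by
    have h := (ContinuousLinearMap.snd ℝ ℝ ℝ).integral_comp_comm hint
    simpa using h
  have hint1 : ∀ j : ℕ, Integrable (fun q => (ρ1 (Fm^[j] q)).1) m := fun j =>
    ⟨(hg1.measurable.comp (hFm.iterate j)).aestronglyMeasurable,
      HasFiniteIntegral.of_bounded (C := C) (Filter.Eventually.of_forall fun q =>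
        (norm_fst_le _).trans (hC _))⟩
  have hint2 : ∀ j : ℕ, Integrable (fun q => (ρ1 (Fm^[j] q)).2) m := fun j =>
    ⟨(hg2.measurable.comp (hFm.iterate j)).aestronglyMeasurable,
      HasFiniteIntegral.of_bounded (C := C) (Filter.Eventually.of_forall fun q =>
        (norm_snd_le _).trans (hC _))⟩
  have hiter1 : ∀ j : ℕ, ∫ q, (ρ1 (Fm^[j] q)).1 ∂m = ∫ q, (ρ1 q).1 ∂m :=
    integral_comp_iterate hFm hinv hg1
  have hiter2 : ∀ j : ℕ, ∫ q, (ρ1 (Fm^[j] q)).2 ∂m = ∫ q, (ρ1 q).2 ∂m :=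
    integral_comp_iterate hFm hinv hg2
  -- first coordinate
  have hC1 : (0:ℝ) ≤ 2 * ((k:ℝ) * B + k) := by
    have h1 : (0:ℝ) ≤ (k:ℝ) := Nat.cast_nonneg k
    have h2 := mul_nonneg h1 hB0
    linarith
  have hmain1 : ∀ n : ℕ, 0 < n → |(∫ q, ρ1 q ∂m).1| ≤ (2 * ((k:ℝ) * B + k)) / n := by
    intro n hn
    have hnpos : (0:ℝ) < n := by exact_mod_cast hn
    have hS : ∫ q, (∑ j ∈ Finset.range n, (ρ1 (Fm^[j] q)).1) ∂m
        = (n : ℝ) * ∫ q, (ρ1 q).1 ∂m := by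
      rw [integral_finset_sum _ (fun j _ => hint1 j),
        Finset.sum_congr rfl (fun j _ => hiter1 j), Finset.sum_const, Finset.card_range,
        nsmul_eq_mul]
    have hbd : ∀ᵐ q ∂m, ‖∑ j ∈ Finset.range n, (ρ1 (Fm^[j] q)).1‖ ≤ 2 * ((k:ℝ) * B + k) := by
      filter_upwards [hae] with q hq
      obtain ⟨i, hik, hx⟩ := hq
      obtain ⟨p, hp⟩ := pr_surj q.2
      have hqeq : q = (shift^[i] (perWord k), pr p) := by
        rw [← hx, hp]
      have hsum : ∑ j ∈ Finset.range n, (ρ1 (Fm^[j] q)).1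
          = (liftOrb (shift^[i] (perWord k)) p n).1 - p.1 := by
        rw [hqeq, ← prod_fst_sum, birkhoff_sum_eq hlift hρ]
        rfl
      rw [Real.norm_eq_abs, hsum]
      exact birkhoff_fst_bound hB0 hB k hk i hik p n
    have hnorm := norm_integral_le_of_norm_le_const hbd
    rw [hS, probReal_univ, mul_one, Real.norm_eq_abs, abs_mul,
      abs_of_nonneg (Nat.cast_nonneg n), hv1] at hnorm
    rw [le_div_iff₀ hnpos]
    linarith [hnorm]
  have hz1 : (∫ q, ρ1 q ∂m).1 = 0 := eq_of_abs_le_div hC1 hmain1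
  -- second coordinate
  have hC2 : (0:ℝ) ≤ 2 * Real.sqrt 2 := by positivity
  have hmain2 : ∀ n : ℕ, 0 < n →
      |(∫ q, ρ1 q ∂m).2 - Real.sqrt 2 / k| ≤ (2 * Real.sqrt 2) / n := by
    intro n hn
    have hnpos : (0:ℝ) < n := by exact_mod_cast hn
    have hS : ∫ q, ((∑ j ∈ Finset.range n, (ρ1 (Fm^[j] q)).2)
          - (n : ℝ) * (Real.sqrt 2 / k)) ∂m
        = (n : ℝ) * ((∫ q, (ρ1 q).2 ∂m) - Real.sqrt 2 / k) := by
      rw [integral_sub (integrable_finset_sum _ (fun j _ => hint2 j)) (integrable_const _),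
        integral_finset_sum _ (fun j _ => hint2 j),
        Finset.sum_congr rfl (fun j _ => hiter2 j), Finset.sum_const, Finset.card_range,
        nsmul_eq_mul, integral_const, probReal_univ, one_smul]
      ring
    have hbd : ∀ᵐ q ∂m, ‖(∑ j ∈ Finset.range n, (ρ1 (Fm^[j] q)).2)
        - (n : ℝ) * (Real.sqrt 2 / k)‖ ≤ 2 * Real.sqrt 2 := by
      filter_upwards [hae] with q hq
      obtain ⟨i, hik, hx⟩ := hq
      obtain ⟨p, hp⟩ := pr_surj q.2
      have hqeq : q = (shift^[i] (perWord k), pr p) := by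
        rw [← hx, hp]
      have hsum : ∑ j ∈ Finset.range n, (ρ1 (Fm^[j] q)).2
          = (liftOrb (shift^[i] (perWord k)) p n).2 - p.2 := by
        rw [hqeq, ← prod_snd_sum, birkhoff_sum_eq hlift hρ]
        rfl
      rw [Real.norm_eq_abs, hsum, sub_sub]
      rw [← sub_sub]
      exact birkhoff_snd_bound k hk i hik p n
    have hnorm := norm_integral_le_of_norm_le_const hbd
    rw [hS, probReal_univ, mul_one, Real.norm_eq_abs, abs_mul,
      abs_of_nonneg (Nat.cast_nonneg n), hv2] at hnorm
    rw [le_div_iff₀ hnpos]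
    linarith [hnorm]
  have hz2 : (∫ q, ρ1 q ∂m).2 - Real.sqrt 2 / k = 0 := eq_of_abs_le_div hC2 hmain2
  rw [Prod.ext_iff]
  exact ⟨hz1, by simpa [sub_eq_zero] using hz2⟩

lemma forced1 {f : Fin 2 → T2 → T2} (hf : ∀ i, Continuous (f i))
    (hlift : ∀ i p, pr (ftsel i p) = f i (pr p))
    {ρ1 : (ℤ → Fin 2) × T2 → ℝ × ℝ} (hρc : Continuous ρ1)
    (hρ : ∀ x p, ρ1 (x, pr p) = ftsel (x 0) p - p)
    (m : Measure ((ℤ → Fin 2) × T2)) [IsProbabilityMeasure m]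
    (hproj : m.map Prod.fst = Measure.dirac (fun _ => (0 : Fin 2))) :
    (∫ q, ρ1 q ∂m).1 ∈ Set.Icc (-1 : ℝ) 1 ∧ (∫ q, ρ1 q ∂m).2 = 0 := by
  obtain ⟨C, hC⟩ := rho_bound hρc
  have hint : Integrable ρ1 m := ⟨hρc.measurable.aestronglyMeasurable,
    HasFiniteIntegral.of_bounded (Filter.Eventually.of_forall hC)⟩
  have hv1 : ∫ q, (ρ1 q).1 ∂m = (∫ q, ρ1 q ∂m).1 := by
    have h := (ContinuousLinearMap.fst ℝ ℝ ℝ).integral_comp_comm hint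
    simpa using h
  have hv2 : ∫ q, (ρ1 q).2 ∂m = (∫ q, ρ1 q ∂m).2 := by
    have h := (ContinuousLinearMap.snd ℝ ℝ ℝ).integral_comp_comm hint
    simpa using h
  -- a.e. the base point is the zero sequence
  have hae : ∀ᵐ q ∂m, q.1 = (fun _ => (0 : Fin 2)) := by
    rw [ae_iff]
    set z : ℤ → Fin 2 := fun _ => (0:Fin 2) with hzdef
    have hsm : MeasurableSet (Set.singleton z : Set (ℤ → Fin 2)) :=
      measurableSet_singleton _
    have hmap := Measure.map_apply
      (measurable_fst : Measurable (Prod.fst : (ℤ → Fin 2) × T2 → ℤ → Fin 2))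
      hsm.compl (μ := m)
    rw [hproj] at hmap
    have hz : (Measure.dirac z) (Set.singleton z : Set (ℤ → Fin 2))ᶜ = 0 := by
      rw [Measure.dirac_apply' _ hsm.compl]
      apply Set.indicator_of_notMem
      simp [Set.singleton]
    rw [hz] at hmap
    have hset : {q : (ℤ → Fin 2) × T2 | ¬ q.1 = z}
        = Prod.fst ⁻¹' (Set.singleton z : Set (ℤ → Fin 2))ᶜ := by
      ext q
      simp [Set.singleton]
    rw [hset]
    exact hmap.symm
  have hval : ∀ᵐ q ∂m, (ρ1 q).1 = Real.sin (2 * Real.pi * (AddCircle.equivIco 1 0 q.2.2 : ℝ))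
      ∧ (ρ1 q).2 = 0 := by
    filter_upwards [hae] with q hq
    obtain ⟨p, hp⟩ := pr_surj q.2
    have hqeq : q = ((fun _ => (0:Fin 2)), pr p) := by rw [← hq, hp]
    rw [hqeq, hρ]
    have h0 : ftsel ((fun _ => (0:Fin 2)) (0:ℤ)) p = ft0 p := by simp [ftsel]
    rw [h0]
    constructor
    · show p.1 + Real.sin (2 * Real.pi * p.2) - p.1 = _
      have : (pr p).2 = (p.2 : AddCircle (1:ℝ)) := rfl
      rw [this]
      have := scR_coe p.2
      unfold scR at this
      rw [this]
      ring
    · show p.2 - p.2 = 0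
      ring
  constructor
  · have hb : ∀ᵐ q ∂m, ‖(ρ1 q).1‖ ≤ 1 := by
      filter_upwards [hval] with q hq
      rw [Real.norm_eq_abs, hq.1]
      exact Real.abs_sin_le_one _
    have hnorm := norm_integral_le_of_norm_le_const hb
    rw [probReal_univ, mul_one, Real.norm_eq_abs, hv1] at hnorm
    exact abs_le.mp hnorm
  · rw [← hv2]
    have : ∀ᵐ q ∂m, (fun q => (ρ1 q).2) q = 0 := by
      filter_upwards [hval] with q hq
      exact hq.2
    exact integral_eq_zero_of_ae this

end Aux6
section Aux7

lemma exists1 {f : Fin 2 → T2 → T2} (hf : ∀ i, Continuous (f i))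
    (hlift : ∀ i p, pr (ftsel i p) = f i (pr p))
    {ρ1 : (ℤ → Fin 2) × T2 → ℝ × ℝ} (hρc : Continuous ρ1)
    (hρ : ∀ x p, ρ1 (x, pr p) = ftsel (x 0) p - p)
    (v : ℝ × ℝ) (hv1 : v.1 ∈ Set.Icc (-1:ℝ) 1) (hv2 : v.2 = 0) :
    ∃ m : Measure ((ℤ → Fin 2) × T2), IsProbabilityMeasure m ∧
      m.map (coc shift fun x => f (x 0)) = m ∧
      m.map Prod.fst = Measure.dirac (fun _ => (0:Fin 2)) ∧ (∫ q, ρ1 q ∂m) = v := by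
  set t : ℝ := Real.arcsin v.1 / (2 * Real.pi) with ht
  have hπ : (2 * Real.pi) ≠ 0 := by positivity
  have hsin : Real.sin (2 * Real.pi * t) = v.1 := by
    rw [ht, mul_comm (2 * Real.pi), div_mul_cancel₀ _ hπ]
    exact Real.sin_arcsin hv1.1 hv1.2
  set z : ℤ → Fin 2 := fun _ => (0:Fin 2) with hz
  set emb : AddCircle (1:ℝ) → (ℤ → Fin 2) × T2 :=
    fun a => (z, (a, (t : AddCircle (1:ℝ)))) with hembdef
  have hembm : Measurable emb :=
    measurable_const.prodMk (measurable_id.prodMk measurable_const)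
  have hstep : ∀ a : AddCircle (1:ℝ), (coc shift fun x => f (x 0)) (emb a)
      = emb (a + ((Real.sin (2 * Real.pi * t) : ℝ) : AddCircle (1:ℝ))) := by
    intro a
    show (shift z, f (z 0) (a, (t : AddCircle (1:ℝ))))
      = (z, (a + ((Real.sin (2 * Real.pi * t) : ℝ) : AddCircle (1:ℝ)), (t : AddCircle (1:ℝ))))
    have h1 : shift z = z := rfl
    have h2 : f (z 0) (a, (t : AddCircle (1:ℝ)))
        = (a + ((Real.sin (2 * Real.pi * t) : ℝ) : AddCircle (1:ℝ)), (t : AddCircle (1:ℝ))) := by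
      show f 0 (a, (t : AddCircle (1:ℝ))) = _
      rw [f0_apply hlift]
      show (a + _, (t : AddCircle (1:ℝ))) = _
      rw [scR_coe]
    rw [h1, h2]
  have hval : ∀ a : AddCircle (1:ℝ), ρ1 (emb a) = v := by
    intro a
    obtain ⟨r, hr⟩ := circle_surj a
    rw [hembdef]
    show ρ1 (z, ((a : AddCircle (1:ℝ)), (t : AddCircle (1:ℝ)))) = v
    rw [← hr]
    show ρ1 (z, pr (r, t)) = v
    rw [hρ]
    show ftsel (z 0) (r, t) - (r, t) = v
    show ft0 (r, t) - (r, t) = v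
    unfold ft0
    rw [Prod.ext_iff]
    constructor
    · show r + Real.sin (2 * Real.pi * t) - r = v.1
      rw [← hsin]; ring
    · show t - t = v.2
      rw [hv2]; ring
  refine ⟨Measure.map emb volume, Measure.isProbabilityMeasure_map hembm.aemeasurable, ?_, ?_, ?_⟩
  · rw [Measure.map_map (coc_measurable hf) hembm]
    have hcomm : (coc shift fun x => f (x 0)) ∘ emb
        = emb ∘ (fun a => a + ((Real.sin (2 * Real.pi * t) : ℝ) : AddCircle (1:ℝ))) :=
      funext hstep
    rw [hcomm, ← Measure.map_map hembm (measurable_add_const _),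
      (measurePreserving_add_right volume _).map_eq]
  · rw [Measure.map_map measurable_fst hembm]
    have : (Prod.fst ∘ emb) = fun _ : AddCircle (1:ℝ) => z := rfl
    rw [this, Measure.map_const, measure_univ, one_smul]
  · rw [integral_map hembm.aemeasurable hρc.aestronglyMeasurable]
    rw [integral_congr_ae (Filter.Eventually.of_forall hval)]
    simp
lemma exists2 {f : Fin 2 → T2 → T2} (hf : ∀ i, Continuous (f i))
    (hlift : ∀ i p, pr (ftsel i p) = f i (pr p))
    (k : ℕ) (hk : 0 < k) :
    ∃ m : Measure ((ℤ → Fin 2) × T2), IsProbabilityMeasure m ∧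
      m.map (coc shift fun x => f (x 0)) = m ∧
      m.map Prod.fst = ((k:ENNReal)⁻¹ • ∑ i ∈ Finset.range k,
        Measure.dirac (shift^[i] (perWord k))) := by
  set Fm := coc shift fun x : ℤ → Fin 2 => f (x 0) with hFmdef
  have hFm : Measurable Fm := coc_measurable hf
  set emb : ℕ → T2 → (ℤ → Fin 2) × T2 := fun i q => (shift^[i] (perWord k), q) with hembdef
  have hembm : ∀ i, Measurable (emb i) := fun i => measurable_const.prodMk measurable_id
  refine ⟨(k:ENNReal)⁻¹ • ∑ i ∈ Finset.range k, Measure.map (emb i) lam2, ?_, ?_, ?_⟩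
  · constructor
    rw [Measure.smul_apply, Measure.finset_sum_apply]
    have huniv : ∀ i ∈ Finset.range k, Measure.map (emb i) lam2 Set.univ = 1 := by
      intro i _
      rw [Measure.map_apply (hembm i) MeasurableSet.univ, Set.preimage_univ, measure_univ]
    rw [Finset.sum_congr rfl huniv, Finset.sum_const, Finset.card_range, nsmul_eq_mul,
      mul_one, smul_eq_mul]
    exact ENNReal.inv_mul_cancel (by exact_mod_cast hk.ne' : (k:ENNReal) ≠ 0)
      (ENNReal.natCast_ne_top k)
  · rw [Measure.map_smul, map_finset_sum' hFm]
    have hmap_emb : ∀ i, Measure.map Fm (Measure.map (emb i) lam2)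
        = Measure.map (emb (i+1)) lam2 := by
      intro i
      rw [Measure.map_map hFm (hembm i)]
      have hcomp : Fm ∘ emb i = emb (i+1) ∘ f ((shift^[i] (perWord k)) 0) := by
        funext q
        show (shift (shift^[i] (perWord k)), f ((shift^[i] (perWord k)) 0) q) = _
        rw [← Function.iterate_succ_apply' shift i (perWord k)]
        rfl
      rw [hcomp, ← Measure.map_map (hembm (i+1)) (hf _).measurable, (mp_fi hlift _).map_eq]
    rw [Finset.sum_congr rfl (fun i _ => hmap_emb i)]
    obtain ⟨k', rfl⟩ : ∃ k', k = k' + 1 := ⟨k - 1, by omega⟩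
    have hww : shift^[k' + 1] (perWord (k' + 1)) = shift^[0] (perWord (k' + 1)) := by
      rw [shift_iterate_perWord (k' + 1) hk]
      rfl
    have hlast : emb (k' + 1) = emb 0 := by
      funext q
      rw [hembdef]
      simp only
      rw [hww]
    rw [Finset.sum_range_succ, hlast, ← Finset.sum_range_succ' (fun i => Measure.map (emb i) lam2) k']
  · rw [Measure.map_smul, map_finset_sum' measurable_fst]
    congr 1
    apply Finset.sum_congr rfl
    intro i _
    rw [Measure.map_map measurable_fst (hembm i)]
    have : (Prod.fst ∘ emb i) = fun _ : T2 => shift^[i] (perWord k) := rfl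
    rw [this, Measure.map_const, measure_univ, one_smul]

end Aux7
/-- for the locally constant cocycle generated by `f̃₀, f̃₁`, the
rotation set of `δ_{0^∞}` is `[−1,1] × {0}`, while the rotation set of the
uniform measure on the orbit of the `k`-periodic word `0^{k−1}1` is
`{(0, √2/k)}`; hence `μ ↦ ρ_μ(F̃)` is not weak-* continuous. -/
theorem example_rotation_sets_not_continuous
    (f : Fin 2 → T2 → T2) (hf : ∀ i, Continuous (f i))
    (hlift : ∀ i p, pr (ftsel i p) = f i (pr p))
    (ρ1 : (ℤ → Fin 2) × T2 → ℝ × ℝ) (hρc : Continuous ρ1)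
    (hρ : ∀ (x : ℤ → Fin 2) (p : ℝ × ℝ), ρ1 (x, pr p) = ftsel (x 0) p - p) :
    rhoMuSet (coc shift fun x => f (x 0)) ρ1 (Measure.dirac fun _ => 0) =
        {v : ℝ × ℝ | v.1 ∈ Set.Icc (-1 : ℝ) 1 ∧ v.2 = 0} ∧
      ∀ k : ℕ, 0 < k →
        rhoMuSet (coc shift fun x => f (x 0)) ρ1
            ((k : ENNReal)⁻¹ • ∑ i ∈ Finset.range k,
              Measure.dirac (shift^[i] (perWord k))) =
          {((0 : ℝ), Real.sqrt 2 / k)} := by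
  constructor
  · ext v
    simp only [rhoMuSet, Set.mem_setOf_eq]
    constructor
    · rintro ⟨m, hm, hinv, hproj, hintv⟩
      haveI := hm
      have h := forced1 hf hlift hρc hρ m hproj
      rw [hintv] at h
      exact h
    · rintro ⟨hv1, hv2⟩
      exact exists1 hf hlift hρc hρ v hv1 hv2
  · intro k hk
    ext v
    simp only [rhoMuSet, Set.mem_setOf_eq, Set.mem_singleton_iff]
    constructor
    · rintro ⟨m, hm, hinv, hproj, hintv⟩
      haveI := hm
      rw [← hintv]
      exact forced2 hf hlift hρc hρ k hk m hinv hproj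
    · rintro rfl
      obtain ⟨m, hm, hinv, hproj⟩ := exists2 hf hlift k hk
      haveI := hm
      exact ⟨m, hm, hinv, hproj, forced2 hf hlift hρc hρ k hk m hinv hproj⟩
end
end
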